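/- For every integer r ≥ 0 and every z ∈ [0,1), the r-th iterate of φ satisfies φ^{r}(z) = 1 - (1-z)/((r·√(1-z) + 1)²), where φ(z) = 1 - (1 + 1/√(1-z))^{-2}. In particular φ^{r}(0) = 1 - 1/(r+1)². -/
import Mathlib


theorem phi_iterate_formula
    (φ : ℝ → ℝ)
    (hφ : ∀ z ∈ Set.Ico (0:ℝ) 1, φ z = 1 - (1 + 1 / Real.sqrt (1 - z))⁻¹ ^ 2) :
    ∀ (r : ℕ), (∀ z ∈ Set.Ico (0:ℝ) 1,
        φ^[r] z = 1 - (1 - z) / ((r * Real.sqrt (1 - z) + 1) ^ 2)) ∧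
      φ^[r] 0 = 1 - 1 / ((r : ℝ) + 1) ^ 2 := by
  have key : ∀ r : ℕ, ∀ z ∈ Set.Ico (0:ℝ) 1,
      φ^[r] z = 1 - (1 - z) / ((r * Real.sqrt (1 - z) + 1) ^ 2) := by
    intro r
    induction r with
    | zero =>
      intro z hz
      simp
    | succ n ih =>
      intro z hz
      obtain ⟨hz0, hz1⟩ := hz
      have h1z : (0:ℝ) < 1 - z := by linarith
      set s := Real.sqrt (1 - z) with hs_def
      have hs : 0 < s := Real.sqrt_pos.2 h1z
      have hsq : s ^ 2 = 1 - z := Real.sq_sqrt h1z.le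
      have hs1 : s ≤ 1 := Real.sqrt_le_one.2 (by linarith)
      have hd : 0 < (n:ℝ) * s + 1 := by positivity
      have hle : s ≤ (n:ℝ) * s + 1 := by
        have : (0:ℝ) ≤ (n:ℝ) * s := by positivity
        linarith
      have hmem : φ^[n] z ∈ Set.Ico (0:ℝ) 1 := by
        rw [ih z ⟨hz0, hz1⟩]
        constructor
        · have : (1 - z) / ((n:ℝ) * s + 1) ^ 2 ≤ 1 := by
            rw [div_le_one (by positivity), ← hsq]
            exact pow_le_pow_left₀ hs.le hle 2
          linarith
        · have : 0 < (1 - z) / ((n:ℝ) * s + 1) ^ 2 := by positivity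
          linarith
      rw [Function.iterate_succ_apply', hφ _ hmem, ih z ⟨hz0, hz1⟩]
      have hA : 1 - (1 - (1 - z) / ((n:ℝ) * s + 1) ^ 2) = (s / ((n:ℝ) * s + 1)) ^ 2 := by
        rw [div_pow, hsq]; ring
      rw [hA, Real.sqrt_sq (by positivity)]
      have hcast : ((n + 1 : ℕ) : ℝ) = (n : ℝ) + 1 := by push_cast; ring
      rw [hcast]
      have hd' : 0 < ((n:ℝ) + 1) * s + 1 := by positivity
      rw [← hsq]
      field_simp
      ring
  intro r
  refine ⟨key r, ?_⟩
  have h := key r 0 ⟨le_refl 0, one_pos⟩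
  simpa using h
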